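/- Under Assumption (C): let α be (C,τ)-Diophantine and let L ∈ ℕ satisfy C/(2L^τ) ≥ 7ν/d. Let n ≠ m be integers with 0 < |n| ≤ L and 0 < |m| ≤ L, and let E_n, E_m be points in the interior of J with T_f(E_n) − nα ∈ ℤ and T_f(E_m) − mα ∈ ℤ. Assume moreover that ‖T_f(E)‖_𝕋 ≥ C/(2L^τ) for every E between E_n and E_m. Then |E_n − E_m| ≥ (ν/2)·‖(n−m)α‖_𝕋 ≥ Cν/(2·(2L)^τ). -/

import Mathlib

/-- Distance from a real number to the nearest integer, `‖x‖_𝕋`. -/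
noncomputable def torusNorm (x : ℝ) : ℝ := |x - round x|

/-- `α` is `(C,τ)`-Diophantine: `|nα − p| ≥ C/|n|^τ` for every nonzero `n : ℤ` and `p : ℤ`. -/
def IsDiophantine (C τ α : ℝ) : Prop :=
  ∀ n : ℤ, n ≠ 0 → ∀ p : ℤ, C / |(n : ℝ)| ^ τ ≤ |(n : ℝ) * α - (p : ℝ)|

open Set


lemma torusNorm_le_half (x : ℝ) : torusNorm x ≤ 1/2 := by
  rw [torusNorm]; simpa using abs_sub_round x

lemma torusNorm_le_abs (x : ℝ) : torusNorm x ≤ |x| := by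
  rw [torusNorm]
  rcases eq_or_ne (round x) 0 with h | h
  · simp [h]
  · have h1 : (1:ℝ) ≤ |(round x : ℝ)| := by exact_mod_cast Int.one_le_abs h
    have h2 : |x - round x| ≤ 1/2 := abs_sub_round x
    have h3 : |(round x : ℝ)| - |x - (round x : ℝ)| ≤ |x| := by
      have := abs_sub_abs_le_abs_sub ((round x : ℝ)) x
      have h4 : |(round x : ℝ) - x| = |x - (round x : ℝ)| := abs_sub_comm _ _
      linarith
    linarith

lemma torusNorm_add_int (x : ℝ) (k : ℤ) : torusNorm (x + k) = torusNorm x := by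
  rw [torusNorm, torusNorm, round_add_intCast]
  congr 1
  push_cast
  ring


/-- If `f' ≥ 0` on `[x,y]`, `f' x < ν ≤ f' y`, and the Morse condition holds,
then `f'' x ≥ d - ν`. -/
lemma bpos (x y d ν : ℝ) (f' f'' : ℝ → ℝ)
    (hxy : x ≤ y) (hν : 0 < ν) (hνd : ν < d)
    (hder2 : ∀ u ∈ Icc x y, HasDerivAt f' (f'' u) u)
    (hcont2 : ContinuousOn f'' (Icc x y))
    (hpos : ∀ u ∈ Icc x y, 0 ≤ f' u)
    (hM : ∀ u ∈ Icc x y, d ≤ |f' u| + |f'' u|)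
    (hx : f' x < ν) (hy : ν ≤ f' y) :
    d - ν ≤ f'' x := by
  have hcont1 : ContinuousOn f' (Icc x y) :=
    fun u hu => (hder2 u hu).continuousAt.continuousWithinAt
  have hxy' : x < y := by
    rcases eq_or_lt_of_le hxy with h | h
    · subst h; linarith
    · exact h
  -- crossing set
  set S : Set ℝ := Icc x y ∩ f' ⁻¹' {ν} with hS
  have hSclosed : IsClosed S :=
    hcont1.preimage_isClosed_of_isClosed isClosed_Icc isClosed_singleton
  have hSne : S.Nonempty := by
    have h1 : ν ∈ Icc (f' x) (f' y) := ⟨hx.le, hy⟩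
    obtain ⟨u, hu, hfu⟩ := intermediate_value_Icc hxy hcont1 h1
    exact ⟨u, hu, hfu⟩
  have hSbdd : BddBelow S := (bddBelow_Icc (a := y) (b := x)).mono inter_subset_left
  set w := sInf S with hw
  have hwS : w ∈ S := hSclosed.csInf_mem hSne hSbdd
  obtain ⟨hwIcc, hwval⟩ := hwS
  have hwval : f' w = ν := hwval
  have hxw : x < w := by
    rcases eq_or_lt_of_le hwIcc.1 with h | h
    · rw [← h] at hwval; linarith
    · exact h
  have hlt : ∀ v ∈ Ico x w, f' v < ν := by
    intro v hv
    by_contra hge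
    push_neg at hge
    have hvIcc : v ∈ Icc x y := ⟨hv.1, hv.2.le.trans hwIcc.2⟩
    have h1 : ν ∈ Icc (f' x) (f' v) := ⟨hx.le, hge⟩
    obtain ⟨z, hz, hfz⟩ := intermediate_value_Icc hv.1
      (hcont1.mono (Icc_subset_Icc le_rfl hvIcc.2)) h1
    have hzS : z ∈ S := ⟨⟨hz.1, hz.2.trans hvIcc.2⟩, hfz⟩
    have := csInf_le hSbdd hzS
    have : w ≤ v := this.trans hz.2
    exact absurd this (not_le.mpr hv.2)
  by_contra hcon
  push_neg at hcon
  have habs : ∀ u ∈ Icc x w, |f' u| ≤ ν := by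
    intro u hu
    have huIcc : u ∈ Icc x y := ⟨hu.1, hu.2.trans hwIcc.2⟩
    rw [abs_of_nonneg (hpos u huIcc)]
    rcases eq_or_lt_of_le hu.2 with h | h
    · rw [h, hwval]
    · exact (hlt u ⟨hu.1, h⟩).le
  have hfx2 : f'' x ≤ -(d - ν) := by
    have h1 := hM x ⟨le_rfl, hxy⟩
    have h2 : |f' x| ≤ ν := habs x ⟨le_rfl, hxw.le⟩
    have h3 : d - ν ≤ |f'' x| := by linarith
    rcases abs_cases (f'' x) with ⟨h4, _⟩ | ⟨h4, _⟩
    · linarith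
    · linarith
  have hneg2 : ∀ u ∈ Icc x w, f'' u ≤ -(d - ν) := by
    intro u hu
    have huIcc : u ∈ Icc x y := ⟨hu.1, hu.2.trans hwIcc.2⟩
    have h1 := hM u huIcc
    have h2 : d - ν ≤ |f'' u| := by have := habs u hu; linarith
    rcases abs_cases (f'' u) with ⟨h4, _⟩ | ⟨h4, _⟩
    · -- f'' u ≥ d - ν > 0, get IVT zero
      exfalso
      have hupos : (0:ℝ) < f'' u := by linarith
      have hxneg : f'' x < 0 := by linarith
      have hsub : Icc x u ⊆ Icc x y := Icc_subset_Icc le_rfl huIcc.2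
      have h0 : (0:ℝ) ∈ Icc (f'' x) (f'' u) := ⟨hxneg.le, hupos.le⟩
      obtain ⟨z, hz, hfz⟩ := intermediate_value_Icc hu.1 (hcont2.mono hsub) h0
      have hzw : z ∈ Icc x w := ⟨hz.1, hz.2.trans hu.2⟩
      have h5 := hM z (hsub hz)
      have h6 := habs z hzw
      rw [hfz] at h5
      simp at h5
      linarith
    · linarith
  -- MVT on [x, w]
  obtain ⟨ξ, hξ, hslope⟩ := exists_hasDerivAt_eq_slope f' f'' hxw
    (hcont1.mono (Icc_subset_Icc le_rfl hwIcc.2))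
    (fun z hz => hder2 z ⟨hz.1.le, hz.2.le.trans hwIcc.2⟩)
  have hξw : ξ ∈ Icc x w := ⟨hξ.1.le, hξ.2.le⟩
  have h1 := hneg2 ξ hξw
  have h2 : (0:ℝ) < (f' w - f' x) / (w - x) := by
    apply div_pos <;> [skip; linarith]
    rw [hwval]; linarith
  rw [hslope] at h1
  have : (0:ℝ) < d - ν := by linarith
  linarith

/-- The sublevel region `{f' < ν}` is an initial segment of `[c,b]`. -/
lemma vA (c b d ν : ℝ) (f' f'' : ℝ → ℝ)
    (hcb : c ≤ b) (hν : 0 < ν) (hνd : ν < d)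
    (hder2 : ∀ u ∈ Icc c b, HasDerivAt f' (f'' u) u)
    (hcont2 : ContinuousOn f'' (Icc c b))
    (hpos : ∀ u ∈ Icc c b, 0 ≤ f' u)
    (hM : ∀ u ∈ Icc c b, d ≤ |f' u| + |f'' u|)
    (hb : ν ≤ f' b) :
    ∀ u ∈ Icc c b, f' u < ν → ∀ v ∈ Icc c u, f' v < ν := by
  have hcont1 : ContinuousOn f' (Icc c b) :=
    fun u hu => (hder2 u hu).continuousAt.continuousWithinAt
  -- pointwise second-derivative bound
  have hptw : ∀ t ∈ Icc c b, f' t < ν → d - ν ≤ f'' t := by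
    intro t ht ht'
    have hsub : Icc t b ⊆ Icc c b := Icc_subset_Icc ht.1 le_rfl
    exact bpos t b d ν f' f'' ht.2 hν hνd
      (fun u hu => hder2 u (hsub hu)) (hcont2.mono hsub)
      (fun u hu => hpos u (hsub hu)) (fun u hu => hM u (hsub hu)) ht' hb
  intro u hu hu' v hv
  by_contra hge
  push_neg at hge
  have hvu : v ≤ u := hv.2
  have hvu' : v < u := by
    rcases eq_or_lt_of_le hvu with h | h
    · subst h; linarith
    · exact h
  have hvb : v ∈ Icc c b := ⟨hv.1, hvu.trans hu.2⟩
  set S : Set ℝ := Icc v u ∩ f' ⁻¹' Ici ν with hS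
  have hScl : IsClosed S :=
    (hcont1.mono (Icc_subset_Icc hv.1 hu.2)).preimage_isClosed_of_isClosed
      isClosed_Icc isClosed_Ici
  have hSne : S.Nonempty := ⟨v, ⟨le_rfl, hvu⟩, hge⟩
  have hSbdd : BddAbove S := (bddAbove_Icc (a := v) (b := u)).mono inter_subset_left
  set w := sSup S with hw
  have hwS : w ∈ S := hScl.csSup_mem hSne hSbdd
  obtain ⟨hwIcc, hwval⟩ := hwS
  have hwval : ν ≤ f' w := hwval
  have hwu : w < u := by
    rcases eq_or_lt_of_le hwIcc.2 with h | h
    · rw [h] at hwval; linarith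
    · exact h
  have hlt2 : ∀ t ∈ Ioc w u, f' t < ν := by
    intro t ht
    by_contra hget
    push_neg at hget
    have : t ∈ S := ⟨⟨hwIcc.1.trans ht.1.le, ht.2⟩, hget⟩
    have := le_csSup hSbdd this
    exact absurd this (not_le.mpr ht.1)
  obtain ⟨ξ, hξ, hslope⟩ := exists_hasDerivAt_eq_slope f' f'' hwu
    (hcont1.mono (Icc_subset_Icc (hv.1.trans hwIcc.1) hu.2))
    (fun z hz => hder2 z ⟨hv.1.trans (hwIcc.1.trans hz.1.le), hz.2.le.trans hu.2⟩)
  have hξcb : ξ ∈ Icc c b := ⟨hv.1.trans (hwIcc.1.trans hξ.1.le), hξ.2.le.trans hu.2⟩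
  have h1 : f' ξ < ν := hlt2 ξ ⟨hξ.1, hξ.2.le⟩
  have h2 := hptw ξ hξcb h1
  rw [hslope] at h2
  have h4 : (0:ℝ) < u - w := by linarith
  have h5 : (f' u - f' w) / (u - w) * (u - w) = f' u - f' w := by
    field_simp
  have h6 := mul_le_mul_of_nonneg_right h2 h4.le
  rw [h5] at h6
  nlinarith [mul_pos (show (0:ℝ) < d - ν by linarith) h4]

/-- Quantitative structure on the increasing branch. -/
lemma vB (c b d ν : ℝ) (f f' f'' : ℝ → ℝ)
    (hcb : c ≤ b) (hν : 0 < ν) (hνd : ν < d)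
    (hder1 : ∀ u ∈ Icc c b, HasDerivAt f (f' u) u)
    (hder2 : ∀ u ∈ Icc c b, HasDerivAt f' (f'' u) u)
    (hcont2 : ContinuousOn f'' (Icc c b))
    (hpos : ∀ u ∈ Icc c b, 0 ≤ f' u)
    (hM : ∀ u ∈ Icc c b, d ≤ |f' u| + |f'' u|)
    (hc0 : f' c = 0) (hb : ν ≤ f' b) :
    (∀ u ∈ Icc c b, f' u < ν → (d - ν) * (u - c) ≤ f' u) ∧
    (∀ u ∈ Icc c b, f' u < ν → f u - f c ≤ ν * (u - c)) ∧
    (∀ u ∈ Icc c b, f u - f c ≤ ν^2 / (d - ν) → u - c ≤ 2 * ν / (d - ν)) := by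
  have hd' : (0:ℝ) < d - ν := by linarith
  have hcont1 : ContinuousOn f' (Icc c b) :=
    fun u hu => (hder2 u hu).continuousAt.continuousWithinAt
  have hcont0 : ContinuousOn f (Icc c b) :=
    fun u hu => (hder1 u hu).continuousAt.continuousWithinAt
  have hA := vA c b d ν f' f'' hcb hν hνd hder2 hcont2 hpos hM hb
  have hptw : ∀ t ∈ Icc c b, f' t < ν → d - ν ≤ f'' t := by
    intro t ht ht'
    have hsub : Icc t b ⊆ Icc c b := Icc_subset_Icc ht.1 le_rfl
    exact bpos t b d ν f' f'' ht.2 hν hνd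
      (fun u hu => hder2 u (hsub hu)) (hcont2.mono hsub)
      (fun u hu => hpos u (hsub hu)) (fun u hu => hM u (hsub hu)) ht' hb
  have P1 : ∀ u ∈ Icc c b, f' u < ν → (d - ν) * (u - c) ≤ f' u := by
    intro u hu hu'
    rcases eq_or_lt_of_le hu.1 with h | h
    · rw [← h]; simpa using hpos c ⟨le_rfl, hcb⟩
    · obtain ⟨ξ, hξ, hslope⟩ := exists_hasDerivAt_eq_slope f' f'' h
        (hcont1.mono (Icc_subset_Icc le_rfl hu.2))
        (fun z hz => hder2 z ⟨hz.1.le, hz.2.le.trans hu.2⟩)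
      have hξcb : ξ ∈ Icc c b := ⟨hξ.1.le, hξ.2.le.trans hu.2⟩
      have h1 : f' ξ < ν := hA u hu hu' ξ ⟨hξ.1.le, hξ.2.le⟩
      have h2 := hptw ξ hξcb h1
      rw [hslope] at h2
      rw [hc0] at h2
      have h4 : (0:ℝ) < u - c := by linarith
      have h5 : (f' u - 0) / (u - c) * (u - c) = f' u := by field_simp; simp
      nlinarith [mul_le_mul_of_nonneg_right h2 h4.le]
  refine ⟨P1, ?_, ?_⟩
  · intro u hu hu'
    rcases eq_or_lt_of_le hu.1 with h | h
    · rw [← h]; simp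
    · obtain ⟨ξ, hξ, hslope⟩ := exists_hasDerivAt_eq_slope f f' h
        (hcont0.mono (Icc_subset_Icc le_rfl hu.2))
        (fun z hz => hder1 z ⟨hz.1.le, hz.2.le.trans hu.2⟩)
      have h1 : f' ξ < ν := hA u hu hu' ξ ⟨hξ.1.le, hξ.2.le⟩
      have h4 : (0:ℝ) < u - c := by linarith
      have h5 : (f u - f c) / (u - c) * (u - c) = f u - f c := by field_simp
      nlinarith [mul_le_mul_of_nonneg_right (le_of_lt (hslope ▸ h1)) h4.le]
  · intro u hu hval
    by_contra hbig
    push_neg at hbig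
    set q := ν / (d - ν) with hq
    have hq0 : (0:ℝ) < q := div_pos hν hd'
    have hqq : (d - ν) * q = ν := by have := hd'.ne'; rw [hq]; field_simp
    have h2q : 2 * ν / (d - ν) = 2 * q := by rw [hq]; ring
    rw [h2q] at hbig
    set z := c + q with hz
    have hzu : z < u := by linarith
    have hzb : z ∈ Icc c b := ⟨by linarith, by linarith [hu.2]⟩
    have hge : ∀ t ∈ Icc z u, ν ≤ f' t := by
      intro t ht
      by_contra hlt
      push_neg at hlt
      have htcb : t ∈ Icc c b := ⟨le_trans (by linarith) ht.1, ht.2.trans hu.2⟩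
      have hP := P1 t htcb hlt
      have h7 : q ≤ t - c := by
        have h8 : z ≤ t := ht.1
        rw [hz] at h8; linarith
      have h8 := mul_le_mul_of_nonneg_left h7 (le_of_lt hd')
      linarith
    -- f u - f z ≥ ν (u - z)
    obtain ⟨ξ, hξ, hslope⟩ := exists_hasDerivAt_eq_slope f f' hzu
      (hcont0.mono (Icc_subset_Icc hzb.1 hu.2))
      (fun w hw => hder1 w ⟨hzb.1.trans hw.1.le, hw.2.le.trans hu.2⟩)
    have h1 : ν ≤ f' ξ := hge ξ ⟨hξ.1.le, hξ.2.le⟩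
    have h4 : (0:ℝ) < u - z := by linarith
    have hfu : ν * (u - z) ≤ f u - f z := by
      rw [hslope] at h1
      have h5 : (f u - f z) / (u - z) * (u - z) = f u - f z := by field_simp
      nlinarith [mul_le_mul_of_nonneg_right h1 h4.le]
    -- f z ≥ f c
    have hfz : f c ≤ f z := by
      have hcz : c < z := by linarith
      obtain ⟨ξ', hξ', hslope'⟩ := exists_hasDerivAt_eq_slope f f' hcz
        (hcont0.mono (Icc_subset_Icc le_rfl hzb.2))
        (fun w hw => hder1 w ⟨hw.1.le, hw.2.le.trans hzb.2⟩)
      have h1' : 0 ≤ f' ξ' := hpos ξ' ⟨hξ'.1.le, hξ'.2.le.trans hzb.2⟩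
      rw [hslope'] at h1'
      have h4' : (0:ℝ) < z - c := by linarith
      have h5' : (f z - f c) / (z - c) * (z - c) = f z - f c := by field_simp
      have h6' : 0 ≤ (f z - f c) / (z - c) * (z - c) := mul_nonneg h1' h4'.le
      rw [h5'] at h6'
      linarith
    have hν2 : ν^2 / (d - ν) = ν * q := by rw [hq, pow_two, mul_div_assoc]
    rw [hν2] at hval
    have : ν * (u - z) ≤ ν * q := by linarith
    have : u - z ≤ q := le_of_mul_le_mul_left this hν
    have : u - c ≤ 2 * q := by
      have : u - z ≤ q := this
      simp only [hz] at this ⊢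
      linarith
    linarith

lemma injOn_of_morse (a b d : ℝ) (f f' f'' : ℝ → ℝ) (hd : 0 < d)
    (hder1 : ∀ u ∈ Icc a b, HasDerivAt f (f' u) u)
    (hder2 : ∀ u ∈ Icc a b, HasDerivAt f' (f'' u) u)
    (hM : ∀ u ∈ Icc a b, d ≤ |f' u| + |f'' u|)
    (hmono : AntitoneOn f (Icc a b) ∨ MonotoneOn f (Icc a b)) :
    Set.InjOn f (Icc a b) := by
  have key : ∀ x y : ℝ, x ∈ Icc a b → y ∈ Icc a b → f x = f y → x < y → False := by
    intro x y hx hy hfxy hlt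
    have hconst : ∀ u ∈ Icc x y, f u = f x := by
      intro u hu
      have huab : u ∈ Icc a b := ⟨hx.1.trans hu.1, hu.2.trans hy.2⟩
      rcases hmono with hm | hm
      · have h1 : f u ≤ f x := hm hx huab hu.1
        have h2 : f y ≤ f u := hm huab hy hu.2
        linarith [hfxy]
      · have h1 : f x ≤ f u := hm hx huab hu.1
        have h2 : f u ≤ f y := hm huab hy hu.2
        linarith [hfxy]
    -- derivative vanishes on the open interval
    have hD0 : ∀ v ∈ Ioo x y, f' v = 0 := by
      intro v hv
      have hvab : v ∈ Icc a b := ⟨hx.1.trans hv.1.le, hv.2.le.trans hy.2⟩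
      have hev : f =ᶠ[nhds v] (fun _ => f x) := by
        filter_upwards [isOpen_Ioo.mem_nhds hv] with w hw
        exact hconst w ⟨hw.1.le, hw.2.le⟩
      have h1 : HasDerivAt (fun _ : ℝ => f x) (f' v) v :=
        (Filter.EventuallyEq.hasDerivAt_iff hev).mp (hder1 v hvab)
      have h2 : HasDerivAt (fun _ : ℝ => f x) 0 v := hasDerivAt_const v (f x)
      exact h1.unique h2
    set u₀ := (x + y) / 2 with hu₀
    have hu₀m : u₀ ∈ Ioo x y := ⟨by simp only [hu₀]; linarith, by simp only [hu₀]; linarith⟩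
    have hu₀ab : u₀ ∈ Icc a b := ⟨hx.1.trans hu₀m.1.le, hu₀m.2.le.trans hy.2⟩
    have hD20 : f'' u₀ = 0 := by
      have hev : f' =ᶠ[nhds u₀] (fun _ => (0:ℝ)) := by
        filter_upwards [isOpen_Ioo.mem_nhds hu₀m] with w hw
        exact hD0 w hw
      have h1 : HasDerivAt (fun _ : ℝ => (0:ℝ)) (f'' u₀) u₀ :=
        (Filter.EventuallyEq.hasDerivAt_iff hev).mp (hder2 u₀ hu₀ab)
      have h2 : HasDerivAt (fun _ : ℝ => (0:ℝ)) 0 u₀ := hasDerivAt_const u₀ 0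
      exact h1.unique h2
    have := hM u₀ hu₀ab
    rw [hD0 u₀ hu₀m, hD20] at this
    simp at this
    linarith
  intro x hx y hy hfxy
  by_contra hne
  rcases lt_trichotomy x y with h | h | h
  · exact key x y hx hy hfxy h
  · exact hne h
  · exact key y x hy hx hfxy.symm h

/-- Key separation estimate near the joint critical point, in the
configuration "decreasing branch on the left, increasing on the right". -/
lemma key (a c c' b d ν : ℝ) (f f' f'' : ℝ → ℝ)
    (hac : a ≤ c) (hcc' : c ≤ c') (hc'b : c' ≤ b)
    (hν : 0 < ν) (hνd : 2 * ν ≤ d)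
    (hder1 : ∀ u ∈ Icc a c ∪ Icc c' b, HasDerivAt f (f' u) u)
    (hder2 : ∀ u ∈ Icc a c ∪ Icc c' b, HasDerivAt f' (f'' u) u)
    (hcont2 : ContinuousOn f'' (Icc a c ∪ Icc c' b))
    (hneg : ∀ u ∈ Icc a c, f' u ≤ 0)
    (hpos : ∀ u ∈ Icc c' b, 0 ≤ f' u)
    (hM : ∀ u ∈ Icc a c ∪ Icc c' b, d ≤ |f' u| + |f'' u|)
    (hfa : f' a ≤ -ν) (hfb : ν ≤ f' b)
    (hmid : c < c' → f' c ≤ -ν ∧ ν ≤ f' c')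
    (θ ψ : ℝ) (hθ : θ ∈ Icc a c) (hψ : ψ ∈ Icc c' b)
    (hfθψ : f θ = f ψ)
    (hsmall : |f' θ| < ν ∨ |f' ψ| < ν) :
    0 ≤ ψ - θ ∧ ψ - θ ≤ 3 * ν / (d - ν) := by
  have hν' : ν < d := by linarith
  have hd' : (0:ℝ) < d - ν := by linarith
  -- reflected data on the left interval
  set F : ℝ → ℝ := fun u => f (a + c - u) with hF
  set F' : ℝ → ℝ := fun u => -f' (a + c - u) with hF'
  set F'' : ℝ → ℝ := fun u => f'' (a + c - u) with hF''
  have hrefl : ∀ u ∈ Icc a c, a + c - u ∈ Icc a c := by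
    intro u hu; exact ⟨by linarith [hu.2], by linarith [hu.1]⟩
  have hreflU : ∀ u ∈ Icc a c, a + c - u ∈ Icc a c ∪ Icc c' b :=
    fun u hu => Or.inl (hrefl u hu)
  have hder1F : ∀ u ∈ Icc a c, HasDerivAt F (F' u) u := by
    intro u hu
    have h1 : HasDerivAt (fun v : ℝ => a + c - v) (-1) u := by
      simpa using (hasDerivAt_id u).const_sub (a + c)
    have h2 := (hder1 _ (hreflU u hu)).comp u h1
    exact h2.congr_deriv (by simp [hF'])
  have hder2F : ∀ u ∈ Icc a c, HasDerivAt F' (F'' u) u := by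
    intro u hu
    have h1 : HasDerivAt (fun v : ℝ => a + c - v) (-1) u := by
      simpa using (hasDerivAt_id u).const_sub (a + c)
    have h2 := ((hder2 _ (hreflU u hu)).comp u h1).neg
    exact h2.congr_deriv (by simp [hF''])
  have hcont2F : ContinuousOn F'' (Icc a c) := by
    apply (hcont2.mono subset_union_left).comp
    · exact (continuous_const.sub continuous_id).continuousOn
    · intro u hu; exact hrefl u hu
  have hposF : ∀ u ∈ Icc a c, 0 ≤ F' u := by
    intro u hu
    have := hneg _ (hrefl u hu)
    simp only [hF']; linarith
  have hMF : ∀ u ∈ Icc a c, d ≤ |F' u| + |F'' u| := by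
    intro u hu
    have := hM _ (hreflU u hu)
    simp only [hF', hF'', abs_neg]
    exact this
  have hFc : ν ≤ F' c := by
    simp only [hF']
    have : a + c - c = a := by ring
    rw [this]; linarith
  -- first: c = c'
  have hceq : c = c' := by
    by_contra hne
    have hlt : c < c' := lt_of_le_of_ne hcc' hne
    obtain ⟨hmid1, hmid2⟩ := hmid hlt
    rcases hsmall with hsm | hsm
    · -- left case: F' (a+c-θ) < ν, conclude F' a < ν i.e. -f' c < ν, contradiction with f' c ≤ -ν
      have hθ' : a + c - θ ∈ Icc a c := hrefl θ hθ
      have h1 : F' (a + c - θ) < ν := by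
        simp only [hF']
        have : a + c - (a + c - θ) = θ := by ring
        rw [this]
        cases abs_lt.mp hsm with
        | intro h2 h3 => linarith
      have h2 := vA a c d ν F' F'' hac hν hν' hder2F hcont2F hposF hMF hFc
        (a + c - θ) hθ' h1 a ⟨le_rfl, by linarith [hθ.2]⟩
      simp only [hF'] at h2
      have h3 : a + c - a = c := by ring
      rw [h3] at h2
      linarith
    · -- right case: f' c' < ν contradicts ν ≤ f' c'
      have h1 : f' ψ < ν := by
        cases abs_lt.mp hsm with
        | intro h2 h3 => linarith
      have h2 := vA c' b d ν f' f'' hc'b hν hν'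
        (fun u hu => hder2 u (Or.inr hu)) (hcont2.mono subset_union_right)
        hpos (fun u hu => hM u (Or.inr hu)) hfb ψ hψ h1 c' ⟨le_rfl, hψ.1⟩
      linarith
  subst hceq
  have hfc0 : f' c = 0 :=
    le_antisymm (hneg c ⟨hac, le_rfl⟩) (hpos c ⟨le_rfl, hc'b⟩)
  have hF'a : F' a = 0 := by
    simp only [hF']
    have : a + c - a = c := by ring
    rw [this, hfc0, neg_zero]
  have hvbR := vB c b d ν f f' f''
    hc'b hν hν' (fun u hu => hder1 u (Or.inr hu)) (fun u hu => hder2 u (Or.inr hu))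
    (hcont2.mono subset_union_right) hpos (fun u hu => hM u (Or.inr hu)) hfc0 hfb
  have hvbL := vB a c d ν F F' F''
    hac hν hν' hder1F hder2F hcont2F hposF hMF hF'a hFc
  have h0 : 0 ≤ ψ - θ := by linarith [hθ.2, hψ.1]
  have haθ : a + c - θ ∈ Icc a c := hrefl θ hθ
  have hFθ : F (a + c - θ) = f θ := by
    simp only [hF]; congr 1; ring
  have hFa : F a = f c := by
    simp only [hF]; congr 1; ring
  have hF'θ : F' (a + c - θ) = -f' θ := by
    simp only [hF']; congr 1; ring
  rcases hsmall with hsm | hsm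
  · obtain ⟨hsm1, hsm2⟩ := abs_lt.mp hsm
    -- left estimates
    have h1 := hvbL.1 (a + c - θ) haθ (by rw [hF'θ]; linarith)
    rw [hF'θ] at h1
    have h2 := hvbL.2.1 (a + c - θ) haθ (by rw [hF'θ]; linarith)
    rw [hFθ, hFa] at h2
    -- c - θ ≤ ν/(d-ν)
    have h3 : c - θ ≤ ν / (d - ν) := by
      rw [le_div_iff₀ hd']
      have : a + c - θ - a = c - θ := by ring
      rw [this] at h1
      nlinarith
    have h4 : f θ - f c ≤ ν^2 / (d - ν) := by
      have h5 : a + c - θ - a = c - θ := by ring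
      rw [h5] at h2
      have h6 : ν * (c - θ) ≤ ν * (ν / (d - ν)) :=
        mul_le_mul_of_nonneg_left h3 hν.le
      have h7 : ν * (ν / (d - ν)) = ν^2 / (d - ν) := by
        rw [pow_two, mul_div_assoc]
      linarith
    have h8 := hvbR.2.2 ψ hψ (by rw [← hfθψ]; exact h4)
    constructor
    · exact h0
    · have : 2 * ν / (d - ν) + ν / (d - ν) = 3 * ν / (d - ν) := by ring
      linarith
  · obtain ⟨hsm1, hsm2⟩ := abs_lt.mp hsm
    have h1 := hvbR.1 ψ hψ (by linarith)
    have h2 := hvbR.2.1 ψ hψ (by linarith)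
    have h3 : ψ - c ≤ ν / (d - ν) := by
      rw [le_div_iff₀ hd']
      nlinarith
    have h4 : f ψ - f c ≤ ν^2 / (d - ν) := by
      have h6 : ν * (ψ - c) ≤ ν * (ν / (d - ν)) :=
        mul_le_mul_of_nonneg_left h3 hν.le
      have h7 : ν * (ν / (d - ν)) = ν^2 / (d - ν) := by
        rw [pow_two, mul_div_assoc]
      linarith
    have h8 := hvbL.2.2 (a + c - θ) haθ (by rw [hFθ, hFa, hfθψ]; exact h4)
    have h9 : a + c - θ - a = c - θ := by ring
    rw [h9] at h8
    constructor
    · exact h0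
    · have : ν / (d - ν) + 2 * ν / (d - ν) = 3 * ν / (d - ν) := by ring
      linarith

lemma not_interior_left {U : Set ℝ} {x : ℝ} (h : ∀ y ∈ U, x ≤ y) : x ∉ interior U := by
  intro hx
  obtain ⟨ε, hε, hball⟩ := Metric.mem_nhds_iff.1 (mem_interior_iff_mem_nhds.1 hx)
  have h1 : x - ε/2 ∈ Metric.ball x ε := by
    rw [Metric.mem_ball, Real.dist_eq]
    rw [abs_of_nonpos (by linarith)]
    linarith
  have := h _ (hball h1)
  linarith

lemma not_interior_right {U : Set ℝ} {x : ℝ} (h : ∀ y ∈ U, y ≤ x) : x ∉ interior U := by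
  intro hx
  obtain ⟨ε, hε, hball⟩ := Metric.mem_nhds_iff.1 (mem_interior_iff_mem_nhds.1 hx)
  have h1 : x + ε/2 ∈ Metric.ball x ε := by
    rw [Metric.mem_ball, Real.dist_eq]
    rw [abs_of_nonneg (by linarith)]
    linarith
  have := h _ (hball h1)
  linarith

lemma not_interior_gapL {U : Set ℝ} {x g : ℝ} (hxg : x < g)
    (h : ∀ y ∈ U, y ≤ x ∨ g ≤ y) : x ∉ interior U := by
  intro hx
  obtain ⟨ε, hε, hball⟩ := Metric.mem_nhds_iff.1 (mem_interior_iff_mem_nhds.1 hx)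
  set p := x + min ε (g - x) / 2 with hp
  have hmin : 0 < min ε (g - x) := lt_min hε (by linarith)
  have h1 : p ∈ Metric.ball x ε := by
    rw [Metric.mem_ball, Real.dist_eq, hp]
    rw [abs_of_nonneg (by linarith)]
    have := min_le_left ε (g - x)
    linarith
  rcases h _ (hball h1) with h2 | h2
  · rw [hp] at h2; linarith
  · have := min_le_right ε (g - x)
    rw [hp] at h2; linarith

lemma not_interior_gapR {U : Set ℝ} {x g : ℝ} (hxg : x < g)
    (h : ∀ y ∈ U, y ≤ x ∨ g ≤ y) : g ∉ interior U := by
  intro hg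
  obtain ⟨ε, hε, hball⟩ := Metric.mem_nhds_iff.1 (mem_interior_iff_mem_nhds.1 hg)
  set p := g - min ε (g - x) / 2 with hp
  have hmin : 0 < min ε (g - x) := lt_min hε (by linarith)
  have h1 : p ∈ Metric.ball g ε := by
    rw [Metric.mem_ball, Real.dist_eq, hp]
    rw [abs_of_nonpos (by linarith)]
    have := min_le_left ε (g - x)
    linarith
  rcases h _ (hball h1) with h2 | h2
  · have := min_le_right ε (g - x)
    rw [hp] at h2; linarith
  · rw [hp] at h2; linarith

/-- **Separation of double-resonant energies.** Under Assumption (C), for a `(C,τ)`-Diophantine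
`α` and `L` with `C/(2L^τ) ≥ 7ν/d`: if `E_n ≠ E_m` are interior energies whose inverse-branch
differences `T_f(E_n) − nα`, `T_f(E_m) − mα` are integers (`n ≠ m`, `0 < |n|,|m| ≤ L`), and
`‖T_f‖_𝕋 ≥ C/(2L^τ)` between `E_n` and `E_m`, then
`|E_n − E_m| ≥ (ν/2)‖(n−m)α‖_𝕋 ≥ Cν/(2(2L)^τ)`. -/
theorem double_resonance_energy_separation
    (am bm ap bp d D ν D₀ : ℝ) (f f' f'' : ℝ → ℝ)
    (hlem : am ≤ bm) (hlep : ap ≤ bp)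
    (hdisj : Set.Ioo am bm ∩ Set.Ioo ap bp = ∅)
    (hd : 0 < d) (hdD : d ≤ D)
    (hder1 : ∀ θ ∈ Set.Icc am bm ∪ Set.Icc ap bp, HasDerivAt f (f' θ) θ)
    (hder2 : ∀ θ ∈ Set.Icc am bm ∪ Set.Icc ap bp, HasDerivAt f' (f'' θ) θ)
    (hcont2 : ContinuousOn f'' (Set.Icc am bm ∪ Set.Icc ap bp))
    (hneg : ∀ θ ∈ Set.Icc am bm, f' θ ≤ 0)
    (hpos : ∀ θ ∈ Set.Icc ap bp, 0 ≤ f' θ)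
    (hMorse : ∀ θ ∈ Set.Icc am bm ∪ Set.Icc ap bp,
      d ≤ |f' θ| + |f'' θ| ∧ |f' θ| + |f'' θ| ≤ D)
    (himg : f '' Set.Icc am bm = f '' Set.Icc ap bp)
    (hν : 0 < ν) (hνd : ν < d / 2)
    (hbdry : ∀ θ ∈ frontier (Set.Icc am bm ∪ Set.Icc ap bp), ν ≤ |f' θ|)
    (hD₀pos : 0 < D₀) (hD₀D : D₀ ≤ D)
    (hD₀ : ∀ θ ∈ Set.Icc am bm ∪ Set.Icc ap bp, |f' θ| ≤ D₀)
    -- the two branch inverses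
    (gm gp : ℝ → ℝ)
    (hgm : ∀ E ∈ f '' Set.Icc am bm, gm E ∈ Set.Icc am bm ∧ f (gm E) = E)
    (hgp : ∀ E ∈ f '' Set.Icc am bm, gp E ∈ Set.Icc ap bp ∧ f (gp E) = E)
    -- Diophantine data
    (C τ α : ℝ) (hC : 0 < C) (hτ : 0 < τ) (hα : IsDiophantine C τ α)
    (L : ℕ) (hL : 7 * ν / d ≤ C / (2 * (L : ℝ) ^ τ))
    (n m : ℤ) (hnm : n ≠ m)
    (hn0 : n ≠ 0) (hnL : |n| ≤ (L : ℤ)) (hm0 : m ≠ 0) (hmL : |m| ≤ (L : ℤ))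
    (En Em : ℝ)
    (hEn : En ∈ interior (f '' Set.Icc am bm)) (hEm : Em ∈ interior (f '' Set.Icc am bm))
    (hresn : ∃ p : ℤ, gp En - gm En - (n : ℝ) * α = (p : ℝ))
    (hresm : ∃ q : ℤ, gp Em - gm Em - (m : ℝ) * α = (q : ℝ))
    (hbetween : ∀ E ∈ Set.uIcc En Em, C / (2 * (L : ℝ) ^ τ) ≤ torusNorm (gp E - gm E)) :
    ν / 2 * torusNorm (((n : ℝ) - (m : ℝ)) * α) ≤ |En - Em| ∧
    C * ν / (2 * (2 * (L : ℝ)) ^ τ) ≤ ν / 2 * torusNorm (((n : ℝ) - (m : ℝ)) * α) := by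
  -- continuity of f on the two intervals
  have hcontfm : ContinuousOn f (Icc am bm) :=
    fun u hu => (hder1 u (Or.inl hu)).continuousAt.continuousWithinAt
  have hcontfp : ContinuousOn f (Icc ap bp) :=
    fun u hu => (hder1 u (Or.inr hu)).continuousAt.continuousWithinAt
  -- monotonicity of the branches
  have hant : AntitoneOn f (Icc am bm) := by
    apply antitoneOn_of_deriv_nonpos (convex_Icc am bm) hcontfm
    · intro x hx
      rw [interior_Icc] at hx
      exact (hder1 x (Or.inl (Ioo_subset_Icc_self hx))).differentiableAt.differentiableWithinAt
    · intro x hx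
      rw [interior_Icc] at hx
      rw [(hder1 x (Or.inl (Ioo_subset_Icc_self hx))).deriv]
      exact hneg x (Ioo_subset_Icc_self hx)
  have hmon : MonotoneOn f (Icc ap bp) := by
    apply monotoneOn_of_deriv_nonneg (convex_Icc ap bp) hcontfp
    · intro x hx
      rw [interior_Icc] at hx
      exact (hder1 x (Or.inr (Ioo_subset_Icc_self hx))).differentiableAt.differentiableWithinAt
    · intro x hx
      rw [interior_Icc] at hx
      rw [(hder1 x (Or.inr (Ioo_subset_Icc_self hx))).deriv]
      exact hpos x (Ioo_subset_Icc_self hx)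
  -- image identification
  have himJm : f '' Icc am bm = Icc (f bm) (f am) := by
    apply Subset.antisymm
    · rintro _ ⟨x, hx, rfl⟩
      exact ⟨hant hx (right_mem_Icc.mpr hlem) hx.2, hant (left_mem_Icc.mpr hlem) hx hx.1⟩
    · exact intermediate_value_Icc' hlem hcontfm
  have himJp : f '' Icc ap bp = Icc (f ap) (f bp) := by
    apply Subset.antisymm
    · rintro _ ⟨x, hx, rfl⟩
      exact ⟨hmon (left_mem_Icc.mpr hlep) hx hx.1, hmon hx (right_mem_Icc.mpr hlep) hx.2⟩
    · exact intermediate_value_Icc hlep hcontfp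
  have hEn' : En ∈ Ioo (f bm) (f am) := by rw [himJm, interior_Icc] at hEn; exact hEn
  have hEm' : Em ∈ Ioo (f bm) (f am) := by rw [himJm, interior_Icc] at hEm; exact hEm
  have hba : f bm < f am := lt_trans hEn'.1 hEn'.2
  have hIccEq : Icc (f bm) (f am) = Icc (f ap) (f bp) := by
    rw [← himJm, himg, himJp]
  have hap_le : f ap ≤ f bp := hmon (left_mem_Icc.mpr hlep) (right_mem_Icc.mpr hlep) hlep
  have hebot : f ap = f bm := by
    have h1 : f ap ∈ Icc (f bm) (f am) := hIccEq ▸ left_mem_Icc.mpr hap_le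
    have h2 : f bm ∈ Icc (f ap) (f bp) := hIccEq ▸ left_mem_Icc.mpr hba.le
    exact le_antisymm h2.1 h1.1
  have hetop : f bp = f am := by
    have h1 : f bp ∈ Icc (f bm) (f am) := hIccEq ▸ right_mem_Icc.mpr hap_le
    have h2 : f am ∈ Icc (f ap) (f bp) := hIccEq ▸ right_mem_Icc.mpr hba.le
    exact le_antisymm h1.2 h2.2
  have ham_lt : am < bm := by
    rcases eq_or_lt_of_le hlem with h | h
    · rw [h] at hba; exact absurd hba (lt_irrefl _)
    · exact h
  have hap_lt : ap < bp := by
    have hfapbp : f ap < f bp := by rw [hebot, hetop]; exact hba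
    rcases eq_or_lt_of_le hlep with h | h
    · rw [h] at hfapbp; exact absurd hfapbp (lt_irrefl _)
    · exact h
  -- configuration
  have hconfig : bm ≤ ap ∨ bp ≤ am := by
    by_contra h
    push_neg at h
    obtain ⟨h1, h2⟩ := h
    set x := (max am ap + min bm bp) / 2 with hx
    have hmx : max am ap < min bm bp :=
      max_lt (lt_min ham_lt h2) (lt_min h1 hap_lt)
    have hxm : x ∈ Ioo am bm ∩ Ioo ap bp := by
      constructor
      · constructor
        · have := le_max_left am ap; have := min_le_left bm bp
          simp only [hx]; linarith
        · have := le_max_left am ap; have := min_le_left bm bp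
          simp only [hx]; linarith
      · constructor
        · have := le_max_right am ap; have := min_le_right bm bp
          simp only [hx]; linarith
        · have := le_max_right am ap; have := min_le_right bm bp
          simp only [hx]; linarith
    rw [hdisj] at hxm
    exact hxm
  have hUclosed : IsClosed (Icc am bm ∪ Icc ap bp) := isClosed_Icc.union isClosed_Icc
  -- ν is small: 14 ν ≤ d
  have h14 : 14 * ν ≤ d := by
    have h1 := hbetween En left_mem_uIcc
    have h2 := torusNorm_le_half (gp En - gm En)
    have h3 : 7 * ν / d ≤ 1 / 2 := le_trans hL (h1.trans h2)
    rw [div_le_iff₀ hd] at h3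
    linarith
  have hd2 : (0:ℝ) < d - ν := by linarith
  -- injectivity of the branches
  have hinjm : Set.InjOn f (Icc am bm) :=
    injOn_of_morse am bm d f f' f'' hd (fun u hu => hder1 u (Or.inl hu))
      (fun u hu => hder2 u (Or.inl hu)) (fun u hu => (hMorse u (Or.inl hu)).1) (Or.inl hant)
  have hinjp : Set.InjOn f (Icc ap bp) :=
    injOn_of_morse ap bp d f f' f'' hd (fun u hu => hder1 u (Or.inr hu))
      (fun u hu => hder2 u (Or.inr hu)) (fun u hu => (hMorse u (Or.inr hu)).1) (Or.inr hmon)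
  -- the pair separation claim
  have hpair : ∀ θ ψ : ℝ, θ ∈ Icc am bm → ψ ∈ Icc ap bp → f θ = f ψ →
      f θ ∈ uIcc En Em → ¬(|f' θ| < ν ∨ |f' ψ| < ν) := by
    intro θ ψ hθ hψ hfeq hmem hsm
    have hEJ : f θ ∈ f '' Icc am bm := mem_image_of_mem f hθ
    have hgm2 := hgm _ hEJ
    have hgp2 := hgp _ hEJ
    have hgmθ : gm (f θ) = θ := hinjm hgm2.1 hθ hgm2.2
    have hgpψ : gp (f θ) = ψ := hinjp hgp2.1 hψ (by rw [hgp2.2, hfeq])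
    have hsep : |ψ - θ| ≤ 3 * ν / (d - ν) := by
      rcases hconfig with hcfg | hcfg
      · -- configuration 1 : Im left of Ip
        have hUsub : (Icc am bm ∪ Icc ap bp) ⊆ Icc am bp :=
          union_subset (Icc_subset_Icc le_rfl (by linarith))
            (Icc_subset_Icc (by linarith) le_rfl)
        have hamf : am ∈ frontier (Icc am bm ∪ Icc ap bp) := by
          rw [hUclosed.frontier_eq]
          exact ⟨Or.inl (left_mem_Icc.mpr hlem),
            not_interior_left (fun y hy => (hUsub hy).1)⟩
        have hbpf : bp ∈ frontier (Icc am bm ∪ Icc ap bp) := by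
          rw [hUclosed.frontier_eq]
          exact ⟨Or.inr (right_mem_Icc.mpr hlep),
            not_interior_right (fun y hy => (hUsub hy).2)⟩
        have hfa : f' am ≤ -ν := by
          have h1 := hbdry am hamf
          have h2 := hneg am (left_mem_Icc.mpr hlem)
          rw [abs_of_nonpos h2] at h1
          linarith
        have hfb : ν ≤ f' bp := by
          have h1 := hbdry bp hbpf
          have h2 := hpos bp (right_mem_Icc.mpr hlep)
          rw [abs_of_nonneg h2] at h1
          linarith
        have hmid : bm < ap → f' bm ≤ -ν ∧ ν ≤ f' ap := by
          intro hlt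
          have hgap : ∀ y ∈ Icc am bm ∪ Icc ap bp, y ≤ bm ∨ ap ≤ y := by
            rintro y (hy | hy)
            · exact Or.inl hy.2
            · exact Or.inr hy.1
          have hbmf : bm ∈ frontier (Icc am bm ∪ Icc ap bp) := by
            rw [hUclosed.frontier_eq]
            exact ⟨Or.inl (right_mem_Icc.mpr hlem), not_interior_gapL hlt hgap⟩
          have hapf : ap ∈ frontier (Icc am bm ∪ Icc ap bp) := by
            rw [hUclosed.frontier_eq]
            exact ⟨Or.inr (left_mem_Icc.mpr hlep), not_interior_gapR hlt hgap⟩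
          constructor
          · have h1 := hbdry bm hbmf
            have h2 := hneg bm (right_mem_Icc.mpr hlem)
            rw [abs_of_nonpos h2] at h1
            linarith
          · have h1 := hbdry ap hapf
            have h2 := hpos ap (left_mem_Icc.mpr hlep)
            rw [abs_of_nonneg h2] at h1
            linarith
        obtain ⟨hge, hle⟩ := key am bm ap bp d ν f f' f'' hlem hcfg hlep hν
          (by linarith) hder1 hder2 hcont2 hneg hpos
          (fun u hu => (hMorse u hu).1) hfa hfb hmid θ ψ hθ hψ hfeq hsm
        rw [abs_of_nonneg hge]
        exact hle
      · -- configuration 2 : Ip left of Im ; reflect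
        set G : ℝ → ℝ := fun x => -f (-x) with hG
        set G' : ℝ → ℝ := fun x => f' (-x) with hG'
        set G'' : ℝ → ℝ := fun x => -f'' (-x) with hG''
        have hmemG : ∀ u ∈ Icc (-bm) (-am) ∪ Icc (-bp) (-ap),
            -u ∈ Icc am bm ∪ Icc ap bp := by
          rintro u (hu | hu)
          · exact Or.inl ⟨by linarith [hu.2], by linarith [hu.1]⟩
          · exact Or.inr ⟨by linarith [hu.2], by linarith [hu.1]⟩
        have hder1G : ∀ u ∈ Icc (-bm) (-am) ∪ Icc (-bp) (-ap),
            HasDerivAt G (G' u) u := by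
          intro u hu
          have h1 : HasDerivAt (fun x : ℝ => -x) (-1) u := by
            exact (hasDerivAt_id u).neg
          have h2 := ((hder1 (-u) (hmemG u hu)).comp u h1).neg
          exact h2.congr_deriv (by simp [hG'])
        have hder2G : ∀ u ∈ Icc (-bm) (-am) ∪ Icc (-bp) (-ap),
            HasDerivAt G' (G'' u) u := by
          intro u hu
          have h1 : HasDerivAt (fun x : ℝ => -x) (-1) u := by
            exact (hasDerivAt_id u).neg
          have h2 := (hder2 (-u) (hmemG u hu)).comp u h1
          exact h2.congr_deriv (by simp [hG''])
        have hcont2G : ContinuousOn G'' (Icc (-bm) (-am) ∪ Icc (-bp) (-ap)) := by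
          apply ContinuousOn.neg
          apply hcont2.comp continuous_neg.continuousOn
          intro u hu
          exact hmemG u hu
        have hnegG : ∀ u ∈ Icc (-bm) (-am), G' u ≤ 0 := by
          intro u hu
          exact hneg (-u) ⟨by linarith [hu.2], by linarith [hu.1]⟩
        have hposG : ∀ u ∈ Icc (-bp) (-ap), 0 ≤ G' u := by
          intro u hu
          exact hpos (-u) ⟨by linarith [hu.2], by linarith [hu.1]⟩
        have hMG : ∀ u ∈ Icc (-bm) (-am) ∪ Icc (-bp) (-ap),
            d ≤ |G' u| + |G'' u| := by
          intro u hu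
          have := (hMorse (-u) (hmemG u hu)).1
          simp only [hG', hG'', abs_neg]
          exact this
        -- frontier facts in configuration 2 : ap ≤ bp ≤ am ≤ bm
        have hUsub : (Icc am bm ∪ Icc ap bp) ⊆ Icc ap bm :=
          union_subset (Icc_subset_Icc (by linarith) le_rfl)
            (Icc_subset_Icc le_rfl (by linarith))
        have hbmf : bm ∈ frontier (Icc am bm ∪ Icc ap bp) := by
          rw [hUclosed.frontier_eq]
          exact ⟨Or.inl (right_mem_Icc.mpr hlem),
            not_interior_right (fun y hy => (hUsub hy).2)⟩
        have hapf : ap ∈ frontier (Icc am bm ∪ Icc ap bp) := by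
          rw [hUclosed.frontier_eq]
          exact ⟨Or.inr (left_mem_Icc.mpr hlep),
            not_interior_left (fun y hy => (hUsub hy).1)⟩
        have hfaG : G' (-bm) ≤ -ν := by
          have h1 := hbdry bm hbmf
          have h2 := hneg bm (right_mem_Icc.mpr hlem)
          rw [abs_of_nonpos h2] at h1
          simp only [hG', neg_neg]
          linarith
        have hfbG : ν ≤ G' (-ap) := by
          have h1 := hbdry ap hapf
          have h2 := hpos ap (left_mem_Icc.mpr hlep)
          rw [abs_of_nonneg h2] at h1
          simp only [hG', neg_neg]
          linarith
        have hmidG : -am < -bp → G' (-am) ≤ -ν ∧ ν ≤ G' (-bp) := by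
          intro hlt
          have hlt' : bp < am := by linarith
          have hgap : ∀ y ∈ Icc am bm ∪ Icc ap bp, y ≤ bp ∨ am ≤ y := by
            rintro y (hy | hy)
            · exact Or.inr hy.1
            · exact Or.inl hy.2
          have hamf : am ∈ frontier (Icc am bm ∪ Icc ap bp) := by
            rw [hUclosed.frontier_eq]
            exact ⟨Or.inl (left_mem_Icc.mpr hlem), not_interior_gapR hlt' hgap⟩
          have hbpf : bp ∈ frontier (Icc am bm ∪ Icc ap bp) := by
            rw [hUclosed.frontier_eq]
            exact ⟨Or.inr (right_mem_Icc.mpr hlep), not_interior_gapL hlt' hgap⟩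
          constructor
          · have h1 := hbdry am hamf
            have h2 := hneg am (left_mem_Icc.mpr hlem)
            rw [abs_of_nonpos h2] at h1
            simp only [hG', neg_neg]
            linarith
          · have h1 := hbdry bp hbpf
            have h2 := hpos bp (right_mem_Icc.mpr hlep)
            rw [abs_of_nonneg h2] at h1
            simp only [hG', neg_neg]
            linarith
        have hθG : -θ ∈ Icc (-bm) (-am) := ⟨by linarith [hθ.2], by linarith [hθ.1]⟩
        have hψG : -ψ ∈ Icc (-bp) (-ap) := ⟨by linarith [hψ.2], by linarith [hψ.1]⟩
        have hfeqG : G (-θ) = G (-ψ) := by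
          simp only [hG, neg_neg, hfeq]
        have hsmG : |G' (-θ)| < ν ∨ |G' (-ψ)| < ν := by
          simp only [hG', neg_neg]
          exact hsm
        obtain ⟨hge, hle⟩ := key (-bm) (-am) (-bp) (-ap) d ν G G' G''
          (by linarith) (by linarith) (by linarith) hν (by linarith)
          hder1G hder2G hcont2G hnegG hposG hMG hfaG hfbG hmidG
          (-θ) (-ψ) hθG hψG hfeqG hsmG
        rw [abs_of_nonpos (by linarith : ψ - θ ≤ 0)]
        linarith
    -- contradiction with hbetween
    have h1 := hbetween (f θ) hmem
    rw [hgpψ, hgmθ] at h1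
    have h2 := torusNorm_le_abs (ψ - θ)
    have h3 : 3 * ν / (d - ν) < 7 * ν / d := by
      rw [div_lt_div_iff₀ hd2 hd]
      nlinarith
    linarith [hL]
  -- the crux claims
  have hcrux_m : ∀ ξ ∈ Icc am bm, f ξ ∈ uIcc En Em → ν ≤ |f' ξ| := by
    intro ξ hξ hmem
    by_contra h
    push_neg at h
    have hEJ : f ξ ∈ f '' Icc am bm := mem_image_of_mem f hξ
    exact hpair ξ (gp (f ξ)) hξ (hgp _ hEJ).1 ((hgp _ hEJ).2).symm hmem (Or.inl h)
  have hcrux_p : ∀ ξ ∈ Icc ap bp, f ξ ∈ uIcc En Em → ν ≤ |f' ξ| := by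
    intro ξ hξ hmem
    by_contra h
    push_neg at h
    have hEJ : f ξ ∈ f '' Icc am bm := by
      rw [himg]; exact mem_image_of_mem f hξ
    apply hpair (gm (f ξ)) ξ (hgm _ hEJ).1 hξ ((hgm _ hEJ).2)
      (by rw [(hgm _ hEJ).2]; exact hmem) (Or.inr h)
  -- Lipschitz-type bounds for inverse branches
  have hlipm : ∀ x y : ℝ, x ∈ Icc am bm → y ∈ Icc am bm →
      f x ∈ uIcc En Em → f y ∈ uIcc En Em → ν * |x - y| ≤ |f x - f y| := by
    have aux : ∀ x y : ℝ, x ∈ Icc am bm → y ∈ Icc am bm → x < y →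
        f x ∈ uIcc En Em → f y ∈ uIcc En Em → ν * (y - x) ≤ |f y - f x| := by
      intro x y hx hy hxy hfx hfy
      obtain ⟨ξ, hξ, hslope⟩ := exists_hasDerivAt_eq_slope f f' hxy
        (hcontfm.mono (Icc_subset_Icc hx.1 hy.2))
        (fun z hz => hder1 z (Or.inl ⟨hx.1.trans hz.1.le, hz.2.le.trans hy.2⟩))
      have hξm : ξ ∈ Icc am bm := ⟨hx.1.trans hξ.1.le, hξ.2.le.trans hy.2⟩
      have hfξ : f ξ ∈ uIcc (f x) (f y) := by
        have h1 : f y ≤ f ξ := hant hξm hy hξ.2.le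
        have h2 : f ξ ≤ f x := hant hx hξm hξ.1.le
        exact Set.mem_uIcc.mpr (Or.inr ⟨h1, h2⟩)
      have hmem2 : f ξ ∈ uIcc En Em := (Set.uIcc_subset_uIcc hfx hfy) hfξ
      have h3 := hcrux_m ξ hξm hmem2
      rw [hslope, abs_div, abs_of_pos (by linarith : (0:ℝ) < y - x),
        le_div_iff₀ (by linarith : (0:ℝ) < y - x)] at h3
      exact h3
    intro x y hx hy hfx hfy
    rcases lt_trichotomy x y with h | h | h
    · have := aux x y hx hy h hfx hfy
      rw [abs_sub_comm x y, abs_of_pos (by linarith : (0:ℝ) < y - x), abs_sub_comm (f x) (f y)]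
      exact this
    · subst h; simp
    · have := aux y x hy hx h hfy hfx
      rw [abs_of_pos (by linarith : (0:ℝ) < x - y)]
      exact this
  have hlipp : ∀ x y : ℝ, x ∈ Icc ap bp → y ∈ Icc ap bp →
      f x ∈ uIcc En Em → f y ∈ uIcc En Em → ν * |x - y| ≤ |f x - f y| := by
    have aux : ∀ x y : ℝ, x ∈ Icc ap bp → y ∈ Icc ap bp → x < y →
        f x ∈ uIcc En Em → f y ∈ uIcc En Em → ν * (y - x) ≤ |f y - f x| := by
      intro x y hx hy hxy hfx hfy
      obtain ⟨ξ, hξ, hslope⟩ := exists_hasDerivAt_eq_slope f f' hxy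
        (hcontfp.mono (Icc_subset_Icc hx.1 hy.2))
        (fun z hz => hder1 z (Or.inr ⟨hx.1.trans hz.1.le, hz.2.le.trans hy.2⟩))
      have hξm : ξ ∈ Icc ap bp := ⟨hx.1.trans hξ.1.le, hξ.2.le.trans hy.2⟩
      have hfξ : f ξ ∈ uIcc (f x) (f y) := by
        have h1 : f x ≤ f ξ := hmon hx hξm hξ.1.le
        have h2 : f ξ ≤ f y := hmon hξm hy hξ.2.le
        exact Set.mem_uIcc.mpr (Or.inl ⟨h1, h2⟩)
      have hmem2 : f ξ ∈ uIcc En Em := (Set.uIcc_subset_uIcc hfx hfy) hfξ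
      have h3 := hcrux_p ξ hξm hmem2
      rw [hslope, abs_div, abs_of_pos (by linarith : (0:ℝ) < y - x),
        le_div_iff₀ (by linarith : (0:ℝ) < y - x)] at h3
      exact h3
    intro x y hx hy hfx hfy
    rcases lt_trichotomy x y with h | h | h
    · have := aux x y hx hy h hfx hfy
      rw [abs_sub_comm x y, abs_of_pos (by linarith : (0:ℝ) < y - x), abs_sub_comm (f x) (f y)]
      exact this
    · subst h; simp
    · have := aux y x hy hx h hfy hfx
      rw [abs_of_pos (by linarith : (0:ℝ) < x - y)]
      exact this
  -- final assembly
  obtain ⟨p, hp⟩ := hresn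
  obtain ⟨q, hq⟩ := hresm
  have hEnJ : En ∈ f '' Icc am bm := interior_subset hEn
  have hEmJ : Em ∈ f '' Icc am bm := interior_subset hEm
  have hgmEn := hgm En hEnJ
  have hgmEm := hgm Em hEmJ
  have hgpEn := hgp En hEnJ
  have hgpEm := hgp Em hEmJ
  have htn1 : torusNorm (((n:ℝ) - m) * α) ≤
      |(gp En - gm En) - (gp Em - gm Em)| := by
    have hTd : (gp En - gm En) - (gp Em - gm Em)
        = ((n:ℝ) - m) * α + ((p - q : ℤ) : ℝ) := by
      push_cast
      linarith [hp, hq]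
    calc torusNorm (((n:ℝ) - m) * α)
        = torusNorm (((n:ℝ) - m) * α + ((p - q : ℤ) : ℝ)) := (torusNorm_add_int _ _).symm
      _ ≤ |((n:ℝ) - m) * α + ((p - q : ℤ) : ℝ)| := torusNorm_le_abs _
      _ = |(gp En - gm En) - (gp Em - gm Em)| := by rw [hTd]
  have h5 : ν * |gm En - gm Em| ≤ |En - Em| := by
    have := hlipm (gm En) (gm Em) hgmEn.1 hgmEm.1
      (by rw [hgmEn.2]; exact left_mem_uIcc) (by rw [hgmEm.2]; exact right_mem_uIcc)
    rw [hgmEn.2, hgmEm.2] at this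
    exact this
  have h6 : ν * |gp En - gp Em| ≤ |En - Em| := by
    have := hlipp (gp En) (gp Em) hgpEn.1 hgpEm.1
      (by rw [hgpEn.2]; exact left_mem_uIcc) (by rw [hgpEm.2]; exact right_mem_uIcc)
    rw [hgpEn.2, hgpEm.2] at this
    exact this
  have h7 : |(gp En - gm En) - (gp Em - gm Em)| ≤ |gp En - gp Em| + |gm En - gm Em| := by
    have heq : (gp En - gm En) - (gp Em - gm Em)
        = (gp En - gp Em) - (gm En - gm Em) := by ring
    rw [heq]
    exact abs_sub _ _
  constructor
  · have h8 := mul_le_mul_of_nonneg_left (htn1.trans h7) (by linarith : (0:ℝ) ≤ ν / 2)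
    nlinarith [h5, h6]
  · -- second inequality
    have hnm' : (n - m : ℤ) ≠ 0 := sub_ne_zero.mpr hnm
    have hcast : ((n:ℝ) - m) = ((n - m : ℤ) : ℝ) := by push_cast; ring
    have hdio := hα (n - m) hnm' (round (((n - m : ℤ) : ℝ) * α))
    have htn2 : C / |((n - m : ℤ) : ℝ)| ^ τ ≤ torusNorm (((n:ℝ) - m) * α) := by
      rw [hcast, torusNorm]
      exact hdio
    have habs2 : |((n - m : ℤ) : ℝ)| ≤ 2 * (L : ℝ) := by
      have h1 : |n - m| ≤ 2 * (L : ℤ) := by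
        calc |n - m| ≤ |n| + |m| := abs_sub n m
          _ ≤ 2 * (L : ℤ) := by linarith
      have h2 : (|n - m| : ℝ) ≤ ((2 * L : ℤ) : ℝ) := by exact_mod_cast h1
      rw [← Int.cast_abs]
      push_cast at h2 ⊢
      linarith
    have hpow : |((n - m : ℤ) : ℝ)| ^ τ ≤ (2 * (L : ℝ)) ^ τ :=
      Real.rpow_le_rpow (abs_nonneg _) habs2 hτ.le
    have hppos : (0:ℝ) < |((n - m : ℤ) : ℝ)| ^ τ := by
      apply Real.rpow_pos_of_pos
      rw [abs_pos]
      exact_mod_cast hnm'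
    have hdiv : C / (2 * (L : ℝ)) ^ τ ≤ C / |((n - m : ℤ) : ℝ)| ^ τ := by
      exact div_le_div_of_nonneg_left hC.le hppos hpow
    have h8 : C / (2 * (L : ℝ)) ^ τ ≤ torusNorm (((n:ℝ) - m) * α) := hdiv.trans htn2
    have h9 := mul_le_mul_of_nonneg_left h8 (by linarith : (0:ℝ) ≤ ν / 2)
    have h10 : ν / 2 * (C / (2 * (L : ℝ)) ^ τ) = C * ν / (2 * (2 * (L : ℝ)) ^ τ) := by
      ring
    linarith [h9, h10]
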